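/- Let X, X' ∈ ℝ^{n×d} be matrices, let all weights be uniform (w = w' = 𝟙_n/n, v = v' = 𝟙_d/d), let p ≥ 1, and let L(a,b) = |a − b|^p. If COOT(X, X', w, w', v, v') = 0 then there exist permutations σ₁ of {1,…,n} and σ₂ of {1,…,d} such that X_{i,k} = X'_{σ₁(i),σ₂(k)} for all i,k. -/

import Mathlib

open Finset Matrix

/-- A probability vector: nonnegative entries summing to 1. -/
def IsProbVec {n : ℕ} (w : Fin n → ℝ) : Prop :=
  (∀ i, 0 ≤ w i) ∧ ∑ i, w i = 1

/-- The transport polytope `Π(w, w')`. -/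
def TransportPolytope {n n' : ℕ} (w : Fin n → ℝ) (w' : Fin n' → ℝ) :
    Set (Matrix (Fin n) (Fin n') ℝ) :=
  {π | (∀ i j, 0 ≤ π i j) ∧ (∀ i, ∑ j, π i j = w i) ∧ (∀ j, ∑ i, π i j = w' j)}

/-- The CO-Optimal Transport objective. -/
def cootCost {n d n' d' : ℕ} (L : ℝ → ℝ → ℝ)
    (X : Matrix (Fin n) (Fin d) ℝ) (X' : Matrix (Fin n') (Fin d') ℝ)
    (πs : Matrix (Fin n) (Fin n') ℝ) (πv : Matrix (Fin d) (Fin d') ℝ) : ℝ :=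
  ∑ i, ∑ j, ∑ k, ∑ l, L (X i k) (X' j l) * πs i j * πv k l

/-- The CO-Optimal Transport value. -/
noncomputable def COOT {n d n' d' : ℕ} (L : ℝ → ℝ → ℝ)
    (X : Matrix (Fin n) (Fin d) ℝ) (X' : Matrix (Fin n') (Fin d') ℝ)
    (w : Fin n → ℝ) (w' : Fin n' → ℝ) (v : Fin d → ℝ) (v' : Fin d' → ℝ) : ℝ :=
  sInf {r | ∃ πs ∈ TransportPolytope w w', ∃ πv ∈ TransportPolytope v v',
    r = cootCost L X X' πs πv}

/-- The transport polytope is compact if all marginal weights are at most 1. -/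
lemma transport_isCompact {n n' : ℕ} (w : Fin n → ℝ) (w' : Fin n' → ℝ)
    (hw : ∀ i, w i ≤ 1) : IsCompact (TransportPolytope w w') := by
  have hK : IsCompact (Set.pi Set.univ fun _ : Fin n =>
      Set.pi Set.univ fun _ : Fin n' => Set.Icc (0:ℝ) 1) :=
    isCompact_univ_pi fun _ => isCompact_univ_pi fun _ => isCompact_Icc
  refine hK.of_isClosed_subset ?_ ?_
  · have h1 : IsClosed (⋂ i, ⋂ j, {π : Matrix (Fin n) (Fin n') ℝ | 0 ≤ π i j}) :=
      isClosed_iInter fun i => isClosed_iInter fun j =>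
        isClosed_le continuous_const (continuous_id.matrix_elem i j)
    have h2 : IsClosed (⋂ i, {π : Matrix (Fin n) (Fin n') ℝ | ∑ j, π i j = w i}) :=
      isClosed_iInter fun i => isClosed_eq
        (continuous_finset_sum _ fun j _ => continuous_id.matrix_elem i j) continuous_const
    have h3 : IsClosed (⋂ j, {π : Matrix (Fin n) (Fin n') ℝ | ∑ i, π i j = w' j}) :=
      isClosed_iInter fun j => isClosed_eq
        (continuous_finset_sum _ fun i _ => continuous_id.matrix_elem i j) continuous_const
    have heq : TransportPolytope w w' =
        (⋂ i, ⋂ j, {π : Matrix (Fin n) (Fin n') ℝ | 0 ≤ π i j}) ∩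
        ((⋂ i, {π : Matrix (Fin n) (Fin n') ℝ | ∑ j, π i j = w i}) ∩
         (⋂ j, {π : Matrix (Fin n) (Fin n') ℝ | ∑ i, π i j = w' j})) := by
      ext π
      simp only [TransportPolytope, Set.mem_setOf_eq, Set.mem_inter_iff, Set.mem_iInter]
    rw [heq]
    exact h1.inter (h2.inter h3)
  · rintro π ⟨hpos, hrow, _⟩
    intro i _ j _
    refine ⟨hpos i j, ?_⟩
    calc π i j ≤ ∑ j', π i j' :=
          Finset.single_le_sum (fun j' _ => hpos i j') (mem_univ j)
      _ = w i := hrow i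
      _ ≤ 1 := hw i

/-- A square transport plan with uniform marginals has a permutation in its support. -/
lemma exists_perm_pos {n : ℕ} (hn : 0 < n) (π : Matrix (Fin n) (Fin n) ℝ)
    (hπ : π ∈ TransportPolytope (fun _ => (n:ℝ)⁻¹) (fun _ => (n:ℝ)⁻¹)) :
    ∃ σ : Equiv.Perm (Fin n), ∀ i, 0 < π i (σ i) := by
  obtain ⟨hpos, hrow, hcol⟩ := hπ
  have hn' : (0:ℝ) < n := by exact_mod_cast hn
  have hM : (n:ℝ) • π ∈ doublyStochastic ℝ (Fin n) := by
    rw [mem_doublyStochastic_iff_sum]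
    refine ⟨fun i j => ?_, fun i => ?_, fun j => ?_⟩
    · simp only [Matrix.smul_apply, smul_eq_mul]
      exact mul_nonneg hn'.le (hpos i j)
    · simp only [Matrix.smul_apply, smul_eq_mul, ← Finset.mul_sum, hrow]
      field_simp
    · simp only [Matrix.smul_apply, smul_eq_mul, ← Finset.mul_sum, hcol]
      field_simp
  obtain ⟨w, hw0, hw1, hwM⟩ := exists_eq_sum_perm_of_mem_doublyStochastic hM
  have hperm : ∀ (τ : Equiv.Perm (Fin n)) (i j : Fin n),
      τ.permMatrix ℝ i j = if τ i = j then 1 else 0 := by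
    intro τ i j
    simp [Equiv.Perm.permMatrix, PEquiv.toMatrix_apply, Equiv.toPEquiv_apply]
  obtain ⟨σ, hσ⟩ : ∃ σ : Equiv.Perm (Fin n), 0 < w σ := by
    by_contra hc
    push_neg at hc
    have : ∑ σ : Equiv.Perm (Fin n), w σ = 0 :=
      Finset.sum_eq_zero fun σ _ => le_antisymm (hc σ) (hw0 σ)
    rw [hw1] at this; norm_num at this
  refine ⟨σ, fun i => ?_⟩
  have hsum : (n:ℝ) * π i (σ i)
      = ∑ τ : Equiv.Perm (Fin n), w τ * (if τ i = σ i then 1 else 0) := by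
    have h := congrFun (congrFun hwM i) (σ i)
    simp only [Matrix.sum_apply, Matrix.smul_apply, smul_eq_mul, hperm] at h
    rw [← h]
  have hle : w σ ≤ ∑ τ : Equiv.Perm (Fin n), w τ * (if τ i = σ i then 1 else 0) := by
    have h0 : ∀ τ ∈ (univ : Finset (Equiv.Perm (Fin n))),
        0 ≤ w τ * (if τ i = σ i then 1 else 0) := fun τ _ => by
      split <;> simp [hw0 τ]
    simpa using Finset.single_le_sum h0 (mem_univ σ)
  nlinarith [hpos i (σ i)]

/-- The uniform coupling belongs to the transport polytope with uniform marginals. -/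
lemma unif_mem_transport {n : ℕ} (hn : 0 < n) :
    (fun _ _ => ((n:ℝ) * n)⁻¹ : Matrix (Fin n) (Fin n) ℝ) ∈
      TransportPolytope (fun _ => (n:ℝ)⁻¹) (fun _ => (n:ℝ)⁻¹) := by
  have hn' : (0:ℝ) < n := by exact_mod_cast hn
  refine ⟨fun i j => by positivity, fun i => ?_, fun j => ?_⟩ <;>
    · simp only [Finset.sum_const, card_univ, Fintype.card_fin, nsmul_eq_mul]
      rw [mul_inv]
      field_simp

theorem perm_of_coot_eq_zero {n d : ℕ} (hn : 0 < n) (hd : 0 < d)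
    (X X' : Matrix (Fin n) (Fin d) ℝ) (p : ℝ) (hp : 1 ≤ p)
    (h : COOT (fun a b => |a - b| ^ p) X X'
        (fun _ => (n : ℝ)⁻¹) (fun _ => (n : ℝ)⁻¹)
        (fun _ => (d : ℝ)⁻¹) (fun _ => (d : ℝ)⁻¹) = 0) :
    ∃ (σ₁ : Equiv.Perm (Fin n)) (σ₂ : Equiv.Perm (Fin d)),
      ∀ i k, X i k = X' (σ₁ i) (σ₂ k) := by
  set L : ℝ → ℝ → ℝ := fun a b => |a - b| ^ p with hL
  set P := TransportPolytope (fun _ : Fin n => (n:ℝ)⁻¹) (fun _ : Fin n => (n:ℝ)⁻¹) with hP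
  set Q := TransportPolytope (fun _ : Fin d => (d:ℝ)⁻¹) (fun _ : Fin d => (d:ℝ)⁻¹) with hQ
  have hn' : (0:ℝ) < n := by exact_mod_cast hn
  have hd' : (0:ℝ) < d := by exact_mod_cast hd
  set f : Matrix (Fin n) (Fin n) ℝ × Matrix (Fin d) (Fin d) ℝ → ℝ :=
    fun q => cootCost L X X' q.1 q.2 with hf
  have hfc : Continuous f := by
    refine continuous_finset_sum _ fun i _ => continuous_finset_sum _ fun j _ =>
      continuous_finset_sum _ fun k _ => continuous_finset_sum _ fun l _ => ?_
    exact (continuous_const.mul (continuous_fst.matrix_elem i j)).mul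
      (continuous_snd.matrix_elem k l)
  have hSeq : {r | ∃ πs ∈ P, ∃ πv ∈ Q, r = cootCost L X X' πs πv} = f '' (P ×ˢ Q) := by
    ext r
    constructor
    · rintro ⟨πs, hπs, πv, hπv, rfl⟩
      exact ⟨(πs, πv), ⟨hπs, hπv⟩, rfl⟩
    · rintro ⟨⟨πs, πv⟩, ⟨hπs, hπv⟩, rfl⟩
      exact ⟨πs, hπs, πv, hπv, rfl⟩
  have hPc : IsCompact P := transport_isCompact _ _ fun _ => by
    rw [inv_le_one_iff₀]; right; exact_mod_cast hn
  have hQc : IsCompact Q := transport_isCompact _ _ fun _ => by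
    rw [inv_le_one_iff₀]; right; exact_mod_cast hd
  have hScompact : IsCompact (f '' (P ×ˢ Q)) := (hPc.prod hQc).image hfc
  have hSne : (f '' (P ×ˢ Q)).Nonempty :=
    ⟨_, Set.mem_image_of_mem f
      (Set.mk_mem_prod (unif_mem_transport hn) (unif_mem_transport hd))⟩
  have hmem : (0:ℝ) ∈ f '' (P ×ˢ Q) := by
    have := hScompact.sInf_mem hSne
    rw [← hSeq] at this ⊢
    rwa [show sInf {r | ∃ πs ∈ P, ∃ πv ∈ Q, r = cootCost L X X' πs πv} = 0 from h] at this
  obtain ⟨⟨πs, πv⟩, hmemPQ, hcost⟩ := hmem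
  have hπs : πs ∈ P := hmemPQ.1
  have hπv : πv ∈ Q := hmemPQ.2
  have hπs0 : ∀ i j, 0 ≤ πs i j := hπs.1
  have hπv0 : ∀ k l, 0 ≤ πv k l := hπv.1
  have hp0 : p ≠ 0 := by linarith
  -- every term of the cost is nonnegative
  have hterm_nn : ∀ (i j : Fin n) (k l : Fin d),
      0 ≤ L (X i k) (X' j l) * πs i j * πv k l := by
    intro i j k l
    have : 0 ≤ L (X i k) (X' j l) := Real.rpow_nonneg (abs_nonneg _) p
    exact mul_nonneg (mul_nonneg this (hπs0 i j)) (hπv0 k l)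
  -- each term vanishes
  have hterm : ∀ (i j : Fin n) (k l : Fin d),
      L (X i k) (X' j l) * πs i j * πv k l = 0 := by
    intro i j k l
    refine le_antisymm ?_ (hterm_nn i j k l)
    calc L (X i k) (X' j l) * πs i j * πv k l
        ≤ ∑ l', L (X i k) (X' j l') * πs i j * πv k l' :=
          Finset.single_le_sum (fun l' _ => hterm_nn i j k l') (mem_univ l)
      _ ≤ ∑ k', ∑ l', L (X i k') (X' j l') * πs i j * πv k' l' :=
          Finset.single_le_sum (fun k' _ =>
            Finset.sum_nonneg fun l' _ => hterm_nn i j k' l') (mem_univ k)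
      _ ≤ ∑ j', ∑ k', ∑ l', L (X i k') (X' j' l') * πs i j' * πv k' l' :=
          Finset.single_le_sum (fun j' _ => Finset.sum_nonneg fun k' _ =>
            Finset.sum_nonneg fun l' _ => hterm_nn i j' k' l') (mem_univ j)
      _ ≤ ∑ i', ∑ j', ∑ k', ∑ l', L (X i' k') (X' j' l') * πs i' j' * πv k' l' :=
          Finset.single_le_sum (fun i' _ => Finset.sum_nonneg fun j' _ =>
            Finset.sum_nonneg fun k' _ =>
            Finset.sum_nonneg fun l' _ => hterm_nn i' j' k' l') (mem_univ i)
      _ = cootCost L X X' πs πv := rfl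
      _ = 0 := hcost
  obtain ⟨σ₁, hσ₁⟩ := exists_perm_pos hn πs hπs
  obtain ⟨σ₂, hσ₂⟩ := exists_perm_pos hd πv hπv
  refine ⟨σ₁, σ₂, fun i k => ?_⟩
  have h0 := hterm i (σ₁ i) k (σ₂ k)
  have hL0 : L (X i k) (X' (σ₁ i) (σ₂ k)) = 0 := by
    by_contra hne
    have hLpos : 0 < L (X i k) (X' (σ₁ i) (σ₂ k)) :=
      lt_of_le_of_ne (Real.rpow_nonneg (abs_nonneg _) p) (Ne.symm hne)
    have : 0 < L (X i k) (X' (σ₁ i) (σ₂ k)) * πs i (σ₁ i) * πv k (σ₂ k) :=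
      mul_pos (mul_pos hLpos (hσ₁ i)) (hσ₂ k)
    linarith
  rw [hL, Real.rpow_eq_zero (abs_nonneg _) hp0, abs_eq_zero, sub_eq_zero] at hL0
  exact hL0
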